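/- With the same setup (finite measure μ of mass m > 0, K : X → (0,∞) measurable), for 0 ≤ p < 1 the reverse inequality holds: Ω_p^{n+p}/V^{n-p} ≥ n^{p-1}(V·V°)^{p-1}·Ω^{n+1}/V^{n-1}, with equality iff p = 1 or K is constant μ-a.e. -/

import Mathlib

open MeasureTheory
open scoped ENNReal NNReal

lemma stmt2_key {X : Type*} [MeasurableSpace X] (μ : Measure X) [IsFiniteMeasure μ]
    (hm : 0 < (μ Set.univ).toReal)
    (K : X → ℝ) (hKpos : ∀ x, 0 < K x) (hKmeas : Measurable K)
    (n : ℕ) (hn : 2 ≤ n) (p : ℝ) (hp0 : 0 ≤ p) (hp1 : p < 1)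
    (hKint : Integrable K μ)
    (hΩp : Integrable (fun x => K x ^ (p / ((n : ℝ) + p))) μ)
    (hΩ : Integrable (fun x => K x ^ ((1 : ℝ) / ((n : ℝ) + 1))) μ) :
    ((∫ x, K x ^ ((1:ℝ)/((n:ℝ)+1)) ∂μ) ^ ((n:ℝ)+1)
      ≤ (∫ x, K x ^ (p/((n:ℝ)+p)) ∂μ) ^ ((n:ℝ)+p) * (∫ x, K x ∂μ) ^ (1-p)) ∧
    ((∫ x, K x ^ ((1:ℝ)/((n:ℝ)+1)) ∂μ) ^ ((n:ℝ)+1)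
      = (∫ x, K x ^ (p/((n:ℝ)+p)) ∂μ) ^ ((n:ℝ)+p) * (∫ x, K x ∂μ) ^ (1-p)
      ↔ ∃ c : ℝ, ∀ᵐ x ∂μ, K x = c) := by
  have hn2 : (2:ℝ) ≤ (n:ℝ) := by exact_mod_cast hn
  have hn0 : (0:ℝ) < n := by linarith
  have hnp : (0:ℝ) < (n:ℝ) + p := by linarith
  have hn1 : (0:ℝ) < (n:ℝ) + 1 := by linarith
  set α : ℝ := p / ((n:ℝ) + p) with hα
  set θ : ℝ := ((n:ℝ) + p) / ((n:ℝ) + 1) with hθ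
  have hθ0 : 0 < θ := by positivity
  have hθ1 : θ < 1 := by
    rw [hθ, div_lt_one hn1]; linarith
  set A : ℝ := ∫ x, K x ^ α ∂μ with hAdef
  set B : ℝ := ∫ x, K x ∂μ with hBdef
  set C : ℝ := ∫ x, K x ^ ((1:ℝ)/((n:ℝ)+1)) ∂μ with hCdef
  have hμuniv : 0 < μ Set.univ := (ENNReal.toReal_pos_iff.mp hm).1
  have hsupp : ∀ (q : ℝ), Function.support (fun x => K x ^ q) = Set.univ := fun q =>
    Set.eq_univ_of_forall fun x => (Real.rpow_pos_of_pos (hKpos x) q).ne'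
  have hA : 0 < A :=
    (integral_pos_iff_support_of_nonneg (fun x => Real.rpow_nonneg (hKpos x).le _) hΩp).2
      (by rw [hsupp]; exact hμuniv)
  have hsK : Function.support K = Set.univ := Set.eq_univ_of_forall fun x => (hKpos x).ne'
  have hB : 0 < B :=
    (integral_pos_iff_support_of_nonneg (fun x => (hKpos x).le) hKint).2
      (by rw [hsK]; exact hμuniv)
  have hC : 0 < C :=
    (integral_pos_iff_support_of_nonneg (fun x => Real.rpow_nonneg (hKpos x).le _) hΩ).2
      (by rw [hsupp]; exact hμuniv)
  -- the constant case computation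
  have hconst : ∀ c : ℝ, (∀ᵐ x ∂μ, K x = c) →
      C ^ ((n:ℝ)+1) = A ^ ((n:ℝ)+p) * B ^ (1-p) := by
    intro c hc
    have hμne : μ ≠ 0 := by
      intro h; rw [h] at hμuniv; simp at hμuniv
    haveI : (MeasureTheory.ae μ).NeBot := ae_neBot.mpr hμne
    obtain ⟨x, hx⟩ := hc.exists
    have hc0 : 0 < c := hx ▸ hKpos x
    set m : ℝ := (μ Set.univ).toReal
    have hA' : A = m * c ^ α := by
      rw [hAdef, integral_congr_ae (hc.mono fun x hx => by rw [hx]), integral_const,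
        smul_eq_mul]; rfl
    have hB' : B = m * c := by
      rw [hBdef, integral_congr_ae hc, integral_const, smul_eq_mul]; rfl
    have hC' : C = m * c ^ ((1:ℝ)/((n:ℝ)+1)) := by
      rw [hCdef, integral_congr_ae (hc.mono fun x hx => by rw [hx]), integral_const,
        smul_eq_mul]; rfl
    rw [hA', hB', hC', Real.mul_rpow hm.le (by positivity),
      Real.mul_rpow hm.le (by positivity), Real.mul_rpow hm.le hc0.le,
      ← Real.rpow_mul hc0.le, ← Real.rpow_mul hc0.le,
      show (1/((n:ℝ)+1)) * ((n:ℝ)+1) = 1 from by field_simp,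
      show α * ((n:ℝ)+p) = p from by rw [hα]; field_simp,
      show m ^ ((n:ℝ)+p) * c ^ p * (m ^ (1-p) * c ^ (1-p))
          = (m ^ ((n:ℝ)+p) * m ^ (1-p)) * (c ^ p * c ^ (1-p)) from by ring,
      ← Real.rpow_add hm, ← Real.rpow_add hc0,
      show (n:ℝ)+p+(1-p) = (n:ℝ)+1 from by ring,
      show p+(1-p) = (1:ℝ) from by ring]
  -- measure ν = K · μ
  set ν : Measure X := μ.withDensity fun x => ((K x).toNNReal : ℝ≥0∞) with hνdef
  have hdens_meas : Measurable fun x => ((K x).toNNReal : ℝ≥0∞) :=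
    hKmeas.real_toNNReal.coe_nnreal_ennreal
  have hnn : 0 ≤ᵐ[μ] K := Filter.Eventually.of_forall fun x => (hKpos x).le
  have hlint : ∫⁻ x, ((K x).toNNReal : ℝ≥0∞) ∂μ = ENNReal.ofReal B :=
    (ofReal_integral_eq_lintegral_ofReal hKint hnn).symm
  haveI : IsFiniteMeasure ν :=
    isFiniteMeasure_withDensity (by rw [hlint]; exact ENNReal.ofReal_ne_top)
  have hνB : (ν Set.univ).toReal = B := by
    rw [hνdef, withDensity_apply _ MeasurableSet.univ, setLIntegral_univ, hlint,
      ENNReal.toReal_ofReal hB.le]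
  have hint : ∀ g : X → ℝ, ∫ x, g x ∂ν = ∫ x, K x * g x ∂μ := by
    intro g
    rw [hνdef, integral_withDensity_eq_integral_smul hKmeas.real_toNNReal g]
    refine integral_congr_ae (Filter.Eventually.of_forall fun x => ?_)
    simp [NNReal.smul_def, Real.coe_toNNReal _ (hKpos x).le]
  have hfν : ∫ x, K x ^ (α - 1) ∂ν = A := by
    rw [hint, hAdef]
    refine integral_congr_ae (Filter.Eventually.of_forall fun x => ?_)
    calc K x * K x ^ (α - 1) = K x ^ (1:ℝ) * K x ^ (α - 1) := by rw [Real.rpow_one]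
      _ = K x ^ ((1:ℝ) + (α - 1)) := (Real.rpow_add (hKpos x) _ _).symm
      _ = K x ^ α := by rw [show (1:ℝ) + (α - 1) = α from by ring]
  have hexp : (1:ℝ) + (α - 1) * θ = 1/((n:ℝ)+1) := by
    rw [hα, hθ]; field_simp; ring_nf
  have hgν : ∫ x, (K x ^ (α - 1)) ^ θ ∂ν = C := by
    rw [hint, hCdef]
    refine integral_congr_ae (Filter.Eventually.of_forall fun x => ?_)
    show K x * (K x ^ (α - 1)) ^ θ = K x ^ ((1:ℝ)/((n:ℝ)+1))
    rw [← Real.rpow_mul (hKpos x).le]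
    calc K x * K x ^ ((α - 1) * θ) = K x ^ (1:ℝ) * K x ^ ((α - 1) * θ) := by
          rw [Real.rpow_one]
      _ = K x ^ ((1:ℝ) + (α - 1) * θ) := (Real.rpow_add (hKpos x) _ _).symm
      _ = K x ^ ((1:ℝ)/((n:ℝ)+1)) := by rw [hexp]
  have hflt : ∀ᵐ x ∂μ, ((K x).toNNReal : ℝ≥0∞) < ⊤ :=
    Filter.Eventually.of_forall fun x => ENNReal.coe_lt_top
  have hfi : Integrable (fun x => K x ^ (α - 1)) ν := by
    rw [hνdef, integrable_withDensity_iff hdens_meas hflt]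
    refine hΩp.congr (Filter.Eventually.of_forall fun x => ?_)
    simp only [ENNReal.coe_toReal, Real.coe_toNNReal _ (hKpos x).le]
    calc K x ^ α = K x ^ ((α - 1) + 1) := by congr 1; ring
      _ = K x ^ (α - 1) * K x ^ (1:ℝ) := Real.rpow_add (hKpos x) _ _
      _ = K x ^ (α - 1) * K x := by rw [Real.rpow_one]
  have hgi : Integrable (fun x => (K x ^ (α - 1)) ^ θ) ν := by
    rw [hνdef, integrable_withDensity_iff hdens_meas hflt]
    refine hΩ.congr (Filter.Eventually.of_forall fun x => ?_)
    show K x ^ ((1:ℝ)/((n:ℝ)+1)) = (K x ^ (α - 1)) ^ θ * (((K x).toNNReal : ℝ≥0∞)).toReal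
    rw [← Real.rpow_mul (hKpos x).le]
    simp only [ENNReal.coe_toReal, Real.coe_toNNReal _ (hKpos x).le]
    rw [show (1:ℝ)/((n:ℝ)+1) = (α - 1) * θ + 1 from by rw [← hexp]; ring,
      Real.rpow_add (hKpos x), Real.rpow_one]
  have hmem : ∀ᵐ x ∂ν, K x ^ (α - 1) ∈ Set.Ici (0:ℝ) :=
    Filter.Eventually.of_forall fun x => Real.rpow_nonneg (hKpos x).le _
  have hcont : ContinuousOn (fun t : ℝ => t ^ θ) (Set.Ici 0) := fun t _ =>
    (Real.continuousAt_rpow_const t θ (Or.inr hθ0.le)).continuousWithinAt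
  have hjen := (Real.strictConcaveOn_rpow hθ0 hθ1).ae_eq_const_or_lt_map_average hcont
    isClosed_Ici hmem hfi hgi
  have hav1 : ⨍ x, K x ^ (α - 1) ∂ν = A / B := by
    rw [average_eq, measureReal_def, hνB, hfν, smul_eq_mul]; ring
  have hav2 : ⨍ x, (K x ^ (α - 1)) ^ θ ∂ν = C / B := by
    rw [average_eq, measureReal_def, hνB, hgν, smul_eq_mul]; ring
  rcases hjen with hconst' | hlt
  · -- constant case
    have hKc : ∃ c : ℝ, ∀ᵐ x ∂μ, K x = c := by
      have h2 : ∀ᵐ x ∂μ, K x ^ (α - 1) = ⨍ x, K x ^ (α - 1) ∂ν := by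
        have h3 := (ae_withDensity_iff' (p := fun x =>
          K x ^ (α - 1) = ⨍ x, K x ^ (α - 1) ∂ν) hdens_meas.aemeasurable).mp hconst'
        refine h3.mono fun x hx => hx ?_
        simp [Real.toNNReal_eq_zero, not_le, hKpos x]
      have hαne : α - 1 ≠ 0 := by
        have h4 : α - 1 = -((n:ℝ)/((n:ℝ)+p)) := by rw [hα]; field_simp; ring
        rw [h4]
        exact neg_ne_zero.mpr (ne_of_gt (by positivity))
      refine ⟨(⨍ x, K x ^ (α - 1) ∂ν) ^ (α - 1)⁻¹, h2.mono fun x hx => ?_⟩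
      rw [← hx, ← Real.rpow_mul (hKpos x).le, mul_inv_cancel₀ hαne, Real.rpow_one]
    obtain ⟨c, hc⟩ := hKc
    have heq := hconst c hc
    exact ⟨heq.le, ⟨fun _ => ⟨c, hc⟩, fun _ => heq⟩⟩
  · -- strict case
    rw [hav1, hav2] at hlt
    have h1 : C < A ^ θ * B ^ (1 - θ) := by
      calc C < (A/B) ^ θ * B := (div_lt_iff₀ hB).mp hlt
        _ = A ^ θ * B ^ (1 - θ) := by
            rw [Real.div_rpow hA.le hB.le, Real.rpow_sub hB, Real.rpow_one]
            have hBθ : (0:ℝ) < B ^ θ := Real.rpow_pos_of_pos hB θ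
            field_simp
    have hstrict : C ^ ((n:ℝ)+1) < A ^ ((n:ℝ)+p) * B ^ (1-p) := by
      calc C ^ ((n:ℝ)+1) < (A ^ θ * B ^ (1 - θ)) ^ ((n:ℝ)+1) :=
            Real.rpow_lt_rpow hC.le h1 (by positivity)
        _ = A ^ ((n:ℝ)+p) * B ^ (1-p) := by
            rw [Real.mul_rpow (by positivity) (by positivity),
              ← Real.rpow_mul hA.le, ← Real.rpow_mul hB.le,
              show θ * ((n:ℝ)+1) = (n:ℝ)+p from by rw [hθ]; field_simp,
              show (1 - θ) * ((n:ℝ)+1) = 1-p from by rw [hθ]; field_simp; ring]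
    exact ⟨hstrict.le, ⟨fun h => absurd h hstrict.ne,
      fun ⟨c, hc⟩ => hconst c hc⟩⟩


/-- Abstract form of the inequality
`Ω_p^{n+p}/V^{n-p} ≥ n^{p-1} (V·V°)^{p-1} · Ω^{n+1}/V^{n-1}` for `0 ≤ p < 1`,
with equality iff `p = 1` or `K` is constant a.e. -/
theorem stmt2 {X : Type*} [MeasurableSpace X] (μ : Measure X) [IsFiniteMeasure μ]
    (hm : 0 < (μ Set.univ).toReal)
    (K : X → ℝ) (hKpos : ∀ x, 0 < K x) (hKmeas : Measurable K)
    (n : ℕ) (hn : 2 ≤ n) (p : ℝ) (hp0 : 0 ≤ p) (hp1 : p < 1)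
    (hKint : Integrable K μ)
    (hΩp : Integrable (fun x => K x ^ (p / ((n : ℝ) + p))) μ)
    (hΩ : Integrable (fun x => K x ^ ((1 : ℝ) / ((n : ℝ) + 1))) μ) :
    (∫ x, K x ^ (p / ((n : ℝ) + p)) ∂μ) ^ ((n : ℝ) + p) /
        ((μ Set.univ).toReal / n) ^ ((n : ℝ) - p)
      ≥ (n : ℝ) ^ (p - 1) *
          (((μ Set.univ).toReal / n) * ((1 / (n : ℝ)) * ∫ x, K x ∂μ)) ^ (p - 1) *
          ((∫ x, K x ^ ((1 : ℝ) / ((n : ℝ) + 1)) ∂μ) ^ ((n : ℝ) + 1) /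
            ((μ Set.univ).toReal / n) ^ ((n : ℝ) - 1)) ∧
    ((∫ x, K x ^ (p / ((n : ℝ) + p)) ∂μ) ^ ((n : ℝ) + p) /
        ((μ Set.univ).toReal / n) ^ ((n : ℝ) - p)
      = (n : ℝ) ^ (p - 1) *
          (((μ Set.univ).toReal / n) * ((1 / (n : ℝ)) * ∫ x, K x ∂μ)) ^ (p - 1) *
          ((∫ x, K x ^ ((1 : ℝ) / ((n : ℝ) + 1)) ∂μ) ^ ((n : ℝ) + 1) /
            ((μ Set.univ).toReal / n) ^ ((n : ℝ) - 1)) ↔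
      p = 1 ∨ ∃ c : ℝ, ∀ᵐ x ∂μ, K x = c) := by
  obtain ⟨hle, hiff⟩ := stmt2_key μ hm K hKpos hKmeas n hn p hp0 hp1 hKint hΩp hΩ
  have hn2 : (2:ℝ) ≤ (n:ℝ) := by exact_mod_cast hn
  have hn0 : (0:ℝ) < n := by linarith
  set m : ℝ := (μ Set.univ).toReal with hmdef
  set A : ℝ := ∫ x, K x ^ (p / ((n:ℝ) + p)) ∂μ with hAdef
  set B : ℝ := ∫ x, K x ∂μ with hBdef
  set C : ℝ := ∫ x, K x ^ ((1:ℝ)/((n:ℝ)+1)) ∂μ with hCdef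
  have hμuniv : 0 < μ Set.univ := (ENNReal.toReal_pos_iff.mp hm).1
  have hB : 0 < B := by
    refine (integral_pos_iff_support_of_nonneg (fun x => (hKpos x).le) hKint).2 ?_
    have hsK : Function.support K = Set.univ := Set.eq_univ_of_forall fun x => (hKpos x).ne'
    rw [hsK]; exact hμuniv
  set V : ℝ := m / (n:ℝ) with hVdef
  have hV : 0 < V := by positivity
  have hBB : B ^ (1-p) * B ^ (p-1) = 1 := by
    rw [← Real.rpow_add hB, show (1-p) + (p-1) = (0:ℝ) from by ring, Real.rpow_zero]
  have hLHS : A ^ ((n:ℝ)+p) / V ^ ((n:ℝ)-p)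
      = (A ^ ((n:ℝ)+p) * B ^ (1-p)) * (B ^ (p-1) * V ^ (p-(n:ℝ))) := by
    rw [div_eq_mul_inv, ← Real.rpow_neg hV.le,
      show -((n:ℝ)-p) = p-(n:ℝ) from by ring,
      show A ^ ((n:ℝ)+p) * B ^ (1-p) * (B ^ (p-1) * V ^ (p-(n:ℝ)))
        = A ^ ((n:ℝ)+p) * (B ^ (1-p) * B ^ (p-1)) * V ^ (p-(n:ℝ)) from by ring,
      hBB, mul_one]
  have hRHS : (n:ℝ) ^ (p-1) * (V * ((1/(n:ℝ)) * B)) ^ (p-1) * (C ^ ((n:ℝ)+1) / V ^ ((n:ℝ)-1))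
      = C ^ ((n:ℝ)+1) * (B ^ (p-1) * V ^ (p-(n:ℝ))) := by
    rw [Real.mul_rpow hV.le (by positivity), Real.mul_rpow (by positivity) hB.le,
      div_eq_mul_inv (C ^ _), ← Real.rpow_neg hV.le]
    have h1 : (n:ℝ) ^ (p-1) * ((1/(n:ℝ)) ^ (p-1)) = 1 := by
      rw [← Real.mul_rpow (by positivity) (by positivity),
        mul_one_div_cancel hn0.ne', Real.one_rpow]
    have h2 : V ^ (p-1) * V ^ (-((n:ℝ)-1)) = V ^ (p-(n:ℝ)) := by
      rw [← Real.rpow_add hV, show p-1 + -((n:ℝ)-1) = p-(n:ℝ) from by ring]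
    calc (n:ℝ) ^ (p-1) * (V ^ (p-1) * ((1/(n:ℝ)) ^ (p-1) * B ^ (p-1))) *
          (C ^ ((n:ℝ)+1) * V ^ (-((n:ℝ)-1)))
        = ((n:ℝ) ^ (p-1) * ((1/(n:ℝ)) ^ (p-1))) * (V ^ (p-1) * V ^ (-((n:ℝ)-1))) *
          B ^ (p-1) * C ^ ((n:ℝ)+1) := by ring
      _ = C ^ ((n:ℝ)+1) * (B ^ (p-1) * V ^ (p-(n:ℝ))) := by rw [h1, h2]; ring
  have hD : 0 < B ^ (p-1) * V ^ (p-(n:ℝ)) := by positivity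
  constructor
  · rw [ge_iff_le, hRHS, hLHS]
    exact mul_le_mul_of_nonneg_right hle hD.le
  · rw [hLHS, hRHS, mul_left_inj' hD.ne']
    constructor
    · exact fun h => Or.inr (hiff.mp h.symm)
    · rintro (rfl | hc)
      · exact absurd rfl hp1.ne
      · exact (hiff.mpr hc).symm
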